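/- Every DH matrix is stable: if J, R, Q are real n×n matrices with Jᵀ = −J, R positive semidefinite, and Q positive definite, then A := (J − R)Q is stable, i.e., every eigenvalue λ ∈ ℂ of A satisfies Re(λ) ≤ 0 and every eigenvalue with Re(λ) = 0 is semisimple. -/

import Mathlib

open Matrix
open scoped ComplexOrder

/-- The complexification of a real matrix. -/
noncomputable def toC {n : ℕ} (A : Matrix (Fin n) (Fin n) ℝ) : Matrix (Fin n) (Fin n) ℂ :=
  A.map (fun a => (a : ℂ))

/-- A real matrix is stable if every complex eigenvalue has nonpositive real part and
every purely imaginary eigenvalue is semisimple (generalized eigenspace = eigenspace). -/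
def IsStable {n : ℕ} (A : Matrix (Fin n) (Fin n) ℝ) : Prop :=
  ∀ μ : ℂ, (∃ x : Fin n → ℂ, x ≠ 0 ∧ toC A *ᵥ x = μ • x) →
    μ.re ≤ 0 ∧ (μ.re = 0 →
      ∀ x : Fin n → ℂ, ((toC A - μ • 1) ^ n) *ᵥ x = 0 ↔ (toC A - μ • 1) *ᵥ x = 0)

lemma DH_skew_re_zero {n : ℕ} {S : Matrix (Fin n) (Fin n) ℂ} (hS : Sᴴ = -S) (z : Fin n → ℂ) :
    (star z ⬝ᵥ S *ᵥ z).re = 0 := by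
  have h : star (star z ⬝ᵥ S *ᵥ z) = -(star z ⬝ᵥ S *ᵥ z) := by
    calc star (star z ⬝ᵥ S *ᵥ z) = star (S *ᵥ z) ⬝ᵥ z := (star_dotProduct _ _).symm
    _ = -(star z ⬝ᵥ S *ᵥ z) := by
        rw [star_mulVec, hS, Matrix.vecMul_neg, neg_dotProduct, ← Matrix.dotProduct_mulVec]
  have := congrArg Complex.re h
  simp at this
  linarith

lemma DH_herm_shift {n : ℕ} {Q : Matrix (Fin n) (Fin n) ℂ} (hQ : Qᴴ = Q) (x v : Fin n → ℂ) :
    star x ⬝ᵥ Q *ᵥ v = star (Q *ᵥ x) ⬝ᵥ v := by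
  rw [star_mulVec, hQ, Matrix.dotProduct_mulVec]

/-- the eigen quadratic identity: β = α - μγ -/
lemma DH_eig_quad {n : ℕ} {S R Q : Matrix (Fin n) (Fin n) ℂ} (hQ : Qᴴ = Q)
    {μ : ℂ} {w : Fin n → ℂ} (hw : ((S - R) * Q) *ᵥ w = μ • w) :
    star (Q *ᵥ w) ⬝ᵥ R *ᵥ (Q *ᵥ w)
      = star (Q *ᵥ w) ⬝ᵥ S *ᵥ (Q *ᵥ w) - μ * (star w ⬝ᵥ Q *ᵥ w) := by
  set z := Q *ᵥ w with hz
  have h1 : star w ⬝ᵥ Q *ᵥ (((S - R) * Q) *ᵥ w) = μ * (star w ⬝ᵥ Q *ᵥ w) := by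
    rw [hw, mulVec_smul, dotProduct_smul, smul_eq_mul]
  have h2 : star w ⬝ᵥ Q *ᵥ (((S - R) * Q) *ᵥ w)
      = star z ⬝ᵥ S *ᵥ z - star z ⬝ᵥ R *ᵥ z := by
    rw [DH_herm_shift hQ, ← hz, ← Matrix.mulVec_mulVec, ← hz, Matrix.sub_mulVec,
      dotProduct_sub]
  rw [h2] at h1
  linear_combination -h1

/-- if Re μ = 0 and w satisfies the eigen equation then R (Q w) = 0 -/
lemma DH_eig_R_zero {n : ℕ} {S R Q : Matrix (Fin n) (Fin n) ℂ}
    (hS : Sᴴ = -S) (hR : R.PosSemidef) (hQ : Q.PosSemidef)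
    {μ : ℂ} (hre : μ.re = 0) {w : Fin n → ℂ} (hw : ((S - R) * Q) *ᵥ w = μ • w) :
    R *ᵥ (Q *ᵥ w) = 0 := by
  have hq := DH_eig_quad hQ.1 hw
  have hγ := hQ.dotProduct_mulVec_nonneg w
  have hβ := hR.dotProduct_mulVec_nonneg (Q *ᵥ w)
  rw [Complex.le_def] at hγ hβ
  have hα := DH_skew_re_zero hS (Q *ᵥ w)
  have hqre := congrArg Complex.re hq
  have hβ0 : star (Q *ᵥ w) ⬝ᵥ R *ᵥ (Q *ᵥ w) = 0 := by
    apply Complex.ext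
    · simp only [Complex.sub_re, Complex.mul_re, hα] at hqre
      simp only [Complex.zero_re]
      rw [hqre, hre, ← hγ.2]
      simp
    · simpa using hβ.2.symm
  exact (hR.dotProduct_mulVec_zero_iff (Q *ᵥ w)).mp hβ0

/-- squared-kernel collapse at purely imaginary eigenvalues -/
lemma DH_sq_kernel {n : ℕ} {S R Q : Matrix (Fin n) (Fin n) ℂ}
    (hS : Sᴴ = -S) (hR : R.PosSemidef) (hQ : Q.PosSemidef)
    (hQ0 : ∀ v : Fin n → ℂ, Q *ᵥ v = 0 → v = 0)
    {μ : ℂ} (hre : μ.re = 0) (y : Fin n → ℂ)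
    (h : ((S - R) * Q - μ • 1) *ᵥ (((S - R) * Q - μ • 1) *ᵥ y) = 0) :
    ((S - R) * Q - μ • 1) *ᵥ y = 0 := by
  set M := (S - R) * Q with hM
  set w := (M - μ • 1) *ᵥ y with hwdef
  have hexp : ∀ v : Fin n → ℂ, (M - μ • 1) *ᵥ v = M *ᵥ v - μ • v := by
    intro v
    rw [Matrix.sub_mulVec, smul_mulVec, one_mulVec]
  have hw : M *ᵥ w = μ • w := by
    have := hexp w
    rw [h] at this
    linear_combination (norm := module) -this
  have hRz : R *ᵥ (Q *ᵥ w) = 0 := DH_eig_R_zero hS hR hQ hre hw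
  have hSz : S *ᵥ (Q *ᵥ w) = μ • w := by
    have : M *ᵥ w = S *ᵥ (Q *ᵥ w) - R *ᵥ (Q *ᵥ w) := by
      rw [hM, ← Matrix.mulVec_mulVec, Matrix.sub_mulVec]
    rw [hRz, sub_zero] at this
    rw [← this, hw]
  have hconj : star μ = -μ := by
    apply Complex.ext <;> simp [hre]
  -- star z ᵥ* (S - R) = μ • star w
  have hvecmul : star (Q *ᵥ w) ᵥ* (S - R) = μ • star w := by
    have h1 : (S - R)ᴴ *ᵥ (Q *ᵥ w) = -(μ • w) := by
      rw [Matrix.conjTranspose_sub, hS, hR.1, Matrix.sub_mulVec, Matrix.neg_mulVec, hSz, hRz,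
        sub_zero]
    have h2 := star_mulVec (M := (S - R)ᴴ) (v := Q *ᵥ w)
    rw [h1, conjTranspose_conjTranspose] at h2
    rw [← h2, star_neg, star_smul, hconj]
    simp
  -- the key vanishing
  have hkey : star w ⬝ᵥ Q *ᵥ w = 0 := by
    have e1 : star w ⬝ᵥ Q *ᵥ w = star w ⬝ᵥ Q *ᵥ (M *ᵥ y) - μ * (star w ⬝ᵥ Q *ᵥ y) := by
      calc star w ⬝ᵥ Q *ᵥ w = star w ⬝ᵥ Q *ᵥ (M *ᵥ y - μ • y) := by rw [hwdef, hexp]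
      _ = star w ⬝ᵥ (Q *ᵥ (M *ᵥ y) - μ • (Q *ᵥ y)) := by rw [Matrix.mulVec_sub, mulVec_smul]
      _ = star w ⬝ᵥ Q *ᵥ (M *ᵥ y) - μ * (star w ⬝ᵥ Q *ᵥ y) := by
          rw [dotProduct_sub, dotProduct_smul, smul_eq_mul]
    have e2 : star w ⬝ᵥ Q *ᵥ (M *ᵥ y) = μ * (star w ⬝ᵥ Q *ᵥ y) := by
      calc star w ⬝ᵥ Q *ᵥ (M *ᵥ y) = star (Q *ᵥ w) ⬝ᵥ (M *ᵥ y) := DH_herm_shift hQ.1 _ _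
      _ = star (Q *ᵥ w) ⬝ᵥ ((S - R) *ᵥ (Q *ᵥ y)) := by rw [hM, ← Matrix.mulVec_mulVec]
      _ = (star (Q *ᵥ w) ᵥ* (S - R)) ⬝ᵥ (Q *ᵥ y) := Matrix.dotProduct_mulVec _ _ _
      _ = (μ • star w) ⬝ᵥ (Q *ᵥ y) := by rw [hvecmul]
      _ = μ * (star w ⬝ᵥ Q *ᵥ y) := by rw [smul_dotProduct, smul_eq_mul]
    rw [e1, e2, sub_self]
  have hQw : Q *ᵥ w = 0 := (hQ.dotProduct_mulVec_zero_iff w).mp hkey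
  exact hQ0 w hQw

lemma DH_pow_kernel {n : ℕ} {N : Matrix (Fin n) (Fin n) ℂ}
    (hsq : ∀ y, N *ᵥ (N *ᵥ y) = 0 → N *ᵥ y = 0) :
    ∀ (k : ℕ) (y : Fin n → ℂ), (N ^ (k + 1)) *ᵥ y = 0 → N *ᵥ y = 0 := by
  intro k
  induction k with
  | zero => intro y h; simpa using h
  | succ m ih =>
      intro y h
      rw [pow_succ, ← Matrix.mulVec_mulVec] at h
      exact hsq y (ih (N *ᵥ y) h)

lemma DH_key {n : ℕ} {S R Q : Matrix (Fin n) (Fin n) ℂ}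
    (hS : Sᴴ = -S) (hR : R.PosSemidef) (hQ : Q.PosSemidef)
    (hQ0 : ∀ v : Fin n → ℂ, Q *ᵥ v = 0 → v = 0) (μ : ℂ)
    (hex : ∃ x : Fin n → ℂ, x ≠ 0 ∧ ((S - R) * Q) *ᵥ x = μ • x) :
    μ.re ≤ 0 ∧ (μ.re = 0 →
      ∀ x : Fin n → ℂ, (((S - R) * Q - μ • 1) ^ n) *ᵥ x = 0 ↔ ((S - R) * Q - μ • 1) *ᵥ x = 0) := by
  obtain ⟨x, hx0, hx⟩ := hex
  constructor
  · -- Re μ ≤ 0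
    have hq := DH_eig_quad hQ.1 hx
    have hγ := hQ.dotProduct_mulVec_nonneg x
    have hβ := hR.dotProduct_mulVec_nonneg (Q *ᵥ x)
    rw [Complex.le_def] at hγ hβ
    have hγne : star x ⬝ᵥ Q *ᵥ x ≠ 0 := by
      intro h
      exact hx0 (hQ0 x ((hQ.dotProduct_mulVec_zero_iff x).mp h))
    have hγpos : 0 < (star x ⬝ᵥ Q *ᵥ x).re := by
      rcases lt_or_eq_of_le hγ.1 with h | h
      · simpa using h
      · exact absurd (Complex.ext h.symm (by simpa using hγ.2.symm)) hγne
    have hα := DH_skew_re_zero hS (Q *ᵥ x)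
    have hqre := congrArg Complex.re hq
    simp only [Complex.sub_re, Complex.mul_re, hα] at hqre
    have hγim : (star x ⬝ᵥ Q *ᵥ x).im = 0 := by simpa using hγ.2.symm
    rw [hγim] at hqre
    have hβre : 0 ≤ (star (Q *ᵥ x) ⬝ᵥ R *ᵥ (Q *ᵥ x)).re := by simpa using hβ.1
    nlinarith
  · intro hre x'
    constructor
    · intro h
      rcases Nat.eq_zero_or_pos n with h0 | hpos
      · subst h0
        have hx' : x' = 0 := Subsingleton.elim x' 0
        rw [hx', Matrix.mulVec_zero]
      · obtain ⟨m, rfl⟩ := Nat.exists_eq_succ_of_ne_zero hpos.ne'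
        exact DH_pow_kernel (fun y hy => DH_sq_kernel hS hR hQ hQ0 hre y hy) m x' h
    · intro h
      rcases Nat.eq_zero_or_pos n with h0 | hpos
      · subst h0
        have hx' : x' = 0 := Subsingleton.elim x' 0
        rw [hx', Matrix.mulVec_zero]
      · obtain ⟨m, rfl⟩ := Nat.exists_eq_succ_of_ne_zero hpos.ne'
        rw [pow_succ, ← Matrix.mulVec_mulVec, h, Matrix.mulVec_zero]

lemma toC_mul {n : ℕ} (A B : Matrix (Fin n) (Fin n) ℝ) : toC (A * B) = toC A * toC B := by
  have := Matrix.map_mul (f := Complex.ofRealHom) (M := B) (L := A)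
  simpa [toC, Complex.ofRealHom] using this

lemma toC_sub {n : ℕ} (A B : Matrix (Fin n) (Fin n) ℝ) : toC (A - B) = toC A - toC B := by
  ext i j
  simp [toC]

lemma toC_conjTranspose {n : ℕ} (A : Matrix (Fin n) (Fin n) ℝ) : (toC A)ᴴ = toC Aᵀ := by
  ext i j
  simp [toC, conjTranspose_apply, Complex.conj_ofReal]

lemma toC_skew {n : ℕ} {J : Matrix (Fin n) (Fin n) ℝ} (hJ : Jᵀ = -J) : (toC J)ᴴ = -(toC J) := by
  rw [toC_conjTranspose, hJ]
  ext i j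
  simp [toC]

lemma toC_posSemidef {n : ℕ} {R : Matrix (Fin n) (Fin n) ℝ} (hR : R.PosSemidef) :
    (toC R).PosSemidef := by
  obtain ⟨B, hB⟩ : ∃ B : Matrix (Fin n) (Fin n) ℝ, R = Bᴴ * B := by
    open scoped MatrixOrder in
    obtain ⟨B, hB⟩ := CStarAlgebra.nonneg_iff_eq_star_mul_self.mp hR.nonneg
    exact ⟨B, by rw [hB, star_eq_conjTranspose]⟩
  have hBt : Bᴴ = Bᵀ := by ext i j; simp [conjTranspose_apply]
  have : toC R = (toC B)ᴴ * toC B := by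
    rw [hB, hBt, toC_mul, toC_conjTranspose]
  rw [this]
  exact Matrix.posSemidef_conjTranspose_mul_self (toC B)

lemma toC_mulVec_inj {n : ℕ} {Q : Matrix (Fin n) (Fin n) ℝ} (hQ : Q.PosDef) :
    ∀ v : Fin n → ℂ, toC Q *ᵥ v = 0 → v = 0 := by
  intro v hv
  have hdet : (toC Q).det = (Q.det : ℂ) := by
    have := RingHom.map_det Complex.ofRealHom Q
    simp only [RingHom.mapMatrix_apply] at this
    rw [toC]
    exact this.symm
  have hunit : IsUnit (toC Q) := by
    rw [Matrix.isUnit_iff_isUnit_det, hdet]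
    exact (isUnit_iff_ne_zero.mpr (by exact_mod_cast hQ.det_pos.ne'))
  have hinj := Matrix.mulVec_injective_iff_isUnit.mpr hunit
  have := hinj (a₁ := v) (a₂ := 0) (by rw [hv, Matrix.mulVec_zero])
  exact this

theorem DH_is_stable {n : ℕ} (J R Q : Matrix (Fin n) (Fin n) ℝ)
    (hJ : Jᵀ = -J) (hR : R.PosSemidef) (hQ : Q.PosDef) :
    IsStable ((J - R) * Q) := by
  intro μ hex
  have hA : toC ((J - R) * Q) = (toC J - toC R) * toC Q := by
    rw [toC_mul, toC_sub]
  rw [hA] at hex ⊢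
  exact DH_key (toC_skew hJ) (toC_posSemidef hR) (toC_posSemidef hQ.posSemidef)
    (toC_mulVec_inj hQ) μ hex
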